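/- Suppose R₀ > 1. Let S, I : [0, ∞) → ℝ be differentiable functions solving the planar SIR system with S(0) > 0 and I(0) > 0. Then (S(t), I(t)) converges as t → ∞ to the endemic equilibrium E* = ((q+μ)/β, (μ/β)(R₀ − 1)); that is, E* is globally asymptotically stable in the open positive quadrant. -/

import Mathlib

open Set Filter Topology

/-- If `f` has nonpositive derivative at every `t ≥ a`, it is antitone on `[a,∞)`. -/
lemma sir_antitoneOn {a : ℝ} {f f' : ℝ → ℝ} (hf : ∀ t ≥ a, HasDerivAt f (f' t) t)
    (h0 : ∀ t ≥ a, f' t ≤ 0) : AntitoneOn f (Ici a) := by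
  apply antitoneOn_of_deriv_nonpos (convex_Ici a)
  · exact fun x hx => ((hf x hx).continuousAt).continuousWithinAt
  · intro x hx
    rw [interior_Ici] at hx
    exact ((hf x hx.le).differentiableAt).differentiableWithinAt
  · intro x hx
    rw [interior_Ici] at hx
    rw [(hf x hx.le).deriv]
    exact h0 x hx.le

lemma sir_monotoneOn {a : ℝ} {f f' : ℝ → ℝ} (hf : ∀ t ≥ a, HasDerivAt f (f' t) t)
    (h0 : ∀ t ≥ a, 0 ≤ f' t) : MonotoneOn f (Ici a) := by
  apply monotoneOn_of_deriv_nonneg (convex_Ici a)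
  · exact fun x hx => ((hf x hx).continuousAt).continuousWithinAt
  · intro x hx
    rw [interior_Ici] at hx
    exact ((hf x hx.le).differentiableAt).differentiableWithinAt
  · intro x hx
    rw [interior_Ici] at hx
    rw [(hf x hx.le).deriv]
    exact h0 x hx.le

/-- derivative of `t ↦ ∫ 0..t g` for continuous `g`. -/
lemma sir_intDeriv {g : ℝ → ℝ} (hg : Continuous g) (t : ℝ) :
    HasDerivAt (fun u => ∫ x in (0:ℝ)..u, g x) (g t) t :=
  intervalIntegral.integral_hasDerivAt_right (hg.intervalIntegrable _ _)
    hg.aestronglyMeasurable.stronglyMeasurableAtFilter hg.continuousAt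

/-- Positivity: if `f' t ≥ g t * f t` on `[0,∞)` with continuous `g` and `f 0 > 0`, then
`f t > 0` for all `t ≥ 0`; indeed `f t ≥ f 0 * exp(∫ g)`. -/
lemma sir_pos {f f' g : ℝ → ℝ} (hg : Continuous g)
    (hf : ∀ t ≥ (0:ℝ), HasDerivAt f (f' t) t)
    (hge : ∀ t ≥ (0:ℝ), g t * f t ≤ f' t) (h0 : 0 < f 0) : ∀ t ≥ (0:ℝ), 0 < f t := by
  set G : ℝ → ℝ := fun u => ∫ x in (0:ℝ)..u, g x with hG
  have hGd : ∀ t : ℝ, HasDerivAt G (g t) t := fun t => sir_intDeriv hg t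
  set φ : ℝ → ℝ := fun t => f t * Real.exp (-G t) with hφ
  have hφd : ∀ t ≥ (0:ℝ), HasDerivAt φ ((f' t - g t * f t) * Real.exp (-G t)) t := by
    intro t ht
    have h1 : HasDerivAt (fun u => Real.exp (-G u)) (-g t * Real.exp (-G t)) t := by
      have := (((hGd t).neg).exp)
      exact this.congr_deriv (by simp only [Pi.neg_apply]; ring)
    have := (hf t ht).mul h1
    exact this.congr_deriv (by ring)
  have hmono : MonotoneOn φ (Ici 0) := by
    apply sir_monotoneOn hφd
    intro t ht
    have h1 := hge t ht
    have h2 := (Real.exp_pos (-G t)).le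
    nlinarith
  intro t ht
  have : φ 0 ≤ φ t := hmono (self_mem_Ici) ht ht
  have hφ0 : φ 0 = f 0 := by
    simp [hφ, hG, intervalIntegral.integral_same]
  rw [hφ0] at this
  have hfpos : 0 < f t * Real.exp (-G t) := lt_of_lt_of_le h0 this
  have := Real.exp_pos (-G t)
  nlinarith

/-- Upper Grönwall bound: `f' ≤ c - k f` on `[0,∞)` with `k > 0` gives `f ≤ max (f 0) (c/k)`. -/
lemma sir_ubound {f f' : ℝ → ℝ} {k c : ℝ} (hk : 0 < k)
    (hf : ∀ t ≥ (0:ℝ), HasDerivAt f (f' t) t)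
    (hle : ∀ t ≥ (0:ℝ), f' t ≤ c - k * f t) : ∀ t ≥ (0:ℝ), f t ≤ max (f 0) (c / k) := by
  set φ : ℝ → ℝ := fun t => (f t - c / k) * Real.exp (k * t) with hφ
  have hφd : ∀ t ≥ (0:ℝ), HasDerivAt φ ((f' t + k * f t - c) * Real.exp (k * t)) t := by
    intro t ht
    have h1 : HasDerivAt (fun u => Real.exp (k * u)) (k * Real.exp (k * t)) t := by
      have := ((hasDerivAt_id t).const_mul k).exp
      exact this.congr_deriv (by simp only [id, mul_one]; ring)
    have := ((hf t ht).sub_const (c / k)).mul h1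
    have hkc : k * (c / k) = c := by field_simp
    exact this.congr_deriv (by linear_combination (-Real.exp (k * t)) * hkc)
  have hanti : AntitoneOn φ (Ici 0) := by
    apply sir_antitoneOn hφd
    intro t ht
    have h1 := hle t ht
    have h2 := Real.exp_pos (k * t)
    nlinarith
  intro t ht
  have h3 : φ t ≤ φ 0 := hanti self_mem_Ici ht ht
  have hφ0 : φ 0 = f 0 - c / k := by simp [hφ]
  rw [hφ0] at h3
  simp only [hφ] at h3
  have he1 : Real.exp (k * t) ≥ 1 := by
    rw [show (1:ℝ) = Real.exp 0 by simp]
    exact Real.exp_le_exp.2 (by positivity)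
  have hepos : (0:ℝ) < Real.exp (k * t) := Real.exp_pos _
  rcases le_or_gt (f 0) (c / k) with h | h
  · refine le_trans ?_ (le_max_right _ _)
    by_contra hlt
    push_neg at hlt
    have h4 : 0 ≤ (f t - c / k) * (Real.exp (k * t) - 1) :=
      mul_nonneg (by linarith) (by linarith)
    nlinarith
  · refine le_trans ?_ (le_max_left _ _)
    by_contra hlt
    push_neg at hlt
    have h4 : 0 ≤ (f t - c / k) * (Real.exp (k * t) - 1) :=
      mul_nonneg (by linarith) (by linarith)
    nlinarith

/-- Lower Grönwall bound. -/
lemma sir_lbound {f f' : ℝ → ℝ} {k c : ℝ} (hk : 0 < k)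
    (hf : ∀ t ≥ (0:ℝ), HasDerivAt f (f' t) t)
    (hle : ∀ t ≥ (0:ℝ), c - k * f t ≤ f' t) : ∀ t ≥ (0:ℝ), min (f 0) (c / k) ≤ f t := by
  have h := sir_ubound hk (f := fun t => -f t) (f' := fun t => -f' t) (k := k) (c := -c)
    (fun t ht => (hf t ht).neg) (fun t ht => by
      show -f' t ≤ -c - k * -f t
      have := hle t ht; linarith)
  intro t ht
  have h2 := h t ht
  simp only [neg_le, le_max_iff] at h2
  rcases h2 with h2 | h2
  · exact le_trans (min_le_left _ _) (by linarith)
  · refine le_trans (min_le_right _ _) ?_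
    rw [neg_div] at h2
    linarith

/-- Linear growth from below. -/
lemma sir_growth {f f' : ℝ → ℝ} {T d : ℝ}
    (hf : ∀ t ≥ T, HasDerivAt f (f' t) t) (hd : ∀ t ≥ T, d ≤ f' t) :
    ∀ t ≥ T, f T + d * (t - T) ≤ f t := by
  have hmono : MonotoneOn (fun u => f u - d * u) (Ici T) := by
    apply sir_monotoneOn (f' := fun u => f' u - d)
    · intro t ht
      have h2 : HasDerivAt (fun u => d * u) d t := by
        simpa using ((hasDerivAt_id t).const_mul d)
      exact (hf t ht).sub h2
    · intro t ht; have := hd t ht; linarith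
  intro t ht
  have := hmono self_mem_Ici ht ht
  simp only at this
  linarith

/-- If continuous `f` never takes value `v` on `[T,∞)` and `f T > v`, then `f > v` on `[T,∞)`. -/
lemma sir_no_cross {f : ℝ → ℝ} {T v : ℝ} (hc : ∀ t ≥ T, ContinuousAt f t)
    (hne : ∀ t ≥ T, f t ≠ v) (h0 : v < f T) : ∀ t ≥ T, v < f t := by
  intro t ht
  rcases lt_or_gt_of_ne (hne t ht) with h | h
  · exfalso
    have hcont : ContinuousOn f (Icc T t) := fun x hx => (hc x hx.1).continuousWithinAt
    have hmem : v ∈ Icc (f t) (f T) := ⟨h.le, h0.le⟩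
    obtain ⟨s, hs, hfs⟩ := intermediate_value_Icc' ht hcont hmem
    exact hne s hs.1 hfs
  · exact h

/-- The scalar Lyapunov function `x ↦ x - a log x`, minimum at `a`. -/
lemma lya_min {a x : ℝ} (ha : 0 < a) (hx : 0 < x) :
    a - a * Real.log a ≤ x - a * Real.log x := by
  have h := Real.log_le_sub_one_of_pos (show 0 < x / a by positivity)
  rw [Real.log_div hx.ne' ha.ne'] at h
  have := mul_le_mul_of_nonneg_left h ha.le
  have hxa : a * (x / a) = x := by field_simp
  nlinarith

lemma lya_strict {a x : ℝ} (ha : 0 < a) (hx : 0 < x) (hne : x ≠ a) :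
    a - a * Real.log a < x - a * Real.log x := by
  have hne' : x / a ≠ 1 := by
    intro h; apply hne; field_simp at h; linarith
  have h := Real.log_lt_sub_one_of_pos (show 0 < x / a by positivity) hne'
  rw [Real.log_div hx.ne' ha.ne'] at h
  have := mul_lt_mul_of_pos_left h ha
  have hxa : a * (x / a) = x := by field_simp
  nlinarith

/-- antitone on `(0, a]`. -/
lemma lya_anti {a : ℝ} (ha : 0 < a) {x y : ℝ} (hx : 0 < x) (hxy : x ≤ y) (hya : y ≤ a) :
    y - a * Real.log y ≤ x - a * Real.log x := by
  have : AntitoneOn (fun z => z - a * Real.log z) (Ioc 0 a) := by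
    apply antitoneOn_of_deriv_nonpos (convex_Ioc 0 a)
    · intro z hz
      exact (continuousAt_id.sub ((Real.continuousAt_log hz.1.ne').const_mul a)).continuousWithinAt
    · intro z hz
      rw [interior_Ioc] at hz
      exact ((hasDerivAt_id z).sub ((Real.hasDerivAt_log hz.1.ne').const_mul a)).differentiableAt.differentiableWithinAt
    · intro z hz
      rw [interior_Ioc] at hz
      have hd : HasDerivAt (fun z : ℝ => z - a * Real.log z) (1 - a * z⁻¹) z :=
        (hasDerivAt_id z).sub ((Real.hasDerivAt_log hz.1.ne').const_mul a)
      rw [hd.deriv]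
      have h1 : 1 ≤ a / z := (one_le_div hz.1).2 hz.2.le
      have h2 : a * z⁻¹ = a / z := by ring
      simp only [h2]
      linarith
  exact this ⟨hx, hxy.trans hya⟩ ⟨hx.trans_le hxy, hya⟩ hxy

/-- monotone on `[a, ∞)`. -/
lemma lya_mono {a : ℝ} (ha : 0 < a) {x y : ℝ} (hx : a ≤ x) (hxy : x ≤ y) :
    x - a * Real.log x ≤ y - a * Real.log y := by
  have : MonotoneOn (fun z => z - a * Real.log z) (Ici a) := by
    apply monotoneOn_of_deriv_nonneg (convex_Ici a)
    · intro z hz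
      have hz0 : 0 < z := lt_of_lt_of_le ha hz
      exact (continuousAt_id.sub ((Real.continuousAt_log hz0.ne').const_mul a)).continuousWithinAt
    · intro z hz
      rw [interior_Ici] at hz
      have hz0 : 0 < z := ha.trans hz
      exact ((hasDerivAt_id z).sub ((Real.hasDerivAt_log hz0.ne').const_mul a)).differentiableAt.differentiableWithinAt
    · intro z hz
      rw [interior_Ici] at hz
      have hz0 : 0 < z := ha.trans hz
      have hd : HasDerivAt (fun z : ℝ => z - a * Real.log z) (1 - a * z⁻¹) z :=
        (hasDerivAt_id z).sub ((Real.hasDerivAt_log hz0.ne').const_mul a)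
      rw [hd.deriv]
      have h1 : a / z ≤ 1 := (div_le_one hz0).2 hz.le
      have h2 : a * z⁻¹ = a / z := by ring
      simp only [h2]
      linarith
  exact this hx (hx.trans hxy) hxy


lemma sir_dlow (A β μ Ss Is r σ St It : ℝ)
    (hβ : 0 < β) (hμ : 0 < μ) (hIs : 0 < Is) (hr : 0 < r) (hσ : 0 < σ)
    (hAeq : A = β * Ss * Is + μ * Ss)
    (hkey : σ * (μ + β * Is + β * r) ≤ β * Ss * r / 2)
    (hSt : 0 < St) (ha : Ss - St < σ) (hb : -σ < Ss - St)
    (hIt : It ≤ Is - r) :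
    β * Ss * r / 2 ≤ A - β * St * It - μ * St := by
  have e1 : β * St * It ≤ β * St * (Is - r) :=
    mul_le_mul_of_nonneg_left hIt (mul_pos hβ hSt).le
  have e2 : A - β * St * (Is - r) - μ * St
      = μ * (Ss - St) + β * Is * (Ss - St) + β * St * r := by
    rw [hAeq]; ring
  nlinarith [mul_lt_mul_of_pos_left hb hμ, mul_lt_mul_of_pos_left hb (mul_pos hβ hIs),
    mul_lt_mul_of_pos_left ha (mul_pos hβ hr)]

lemma sir_dhigh (A β μ Ss Is r σ St It : ℝ)
    (hβ : 0 < β) (hμ : 0 < μ) (hIs : 0 < Is) (hr : 0 < r) (hσ : 0 < σ)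
    (hAeq : A = β * Ss * Is + μ * Ss)
    (hkey : σ * (μ + β * Is + β * r) ≤ β * Ss * r / 2)
    (hSt : 0 < St) (ha : Ss - St < σ) (hb : -σ < Ss - St)
    (hIt : Is + r ≤ It) :
    A - β * St * It - μ * St ≤ -(β * Ss * r / 2) := by
  have e1 : β * St * (Is + r) ≤ β * St * It :=
    mul_le_mul_of_nonneg_left hIt (mul_pos hβ hSt).le
  have e2 : A - β * St * (Is + r) - μ * St
      = μ * (Ss - St) + β * Is * (Ss - St) - β * St * r := by
    rw [hAeq]; ring
  nlinarith [mul_lt_mul_of_pos_left ha hμ, mul_lt_mul_of_pos_left ha (mul_pos hβ hIs),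
    mul_lt_mul_of_pos_left hb (mul_pos hβ hr)]

set_option maxHeartbeats 1600000 in
open Filter in
theorem sir_global_stability_endemic (A β μ q : ℝ)
    (hA : 0 < A) (hβ : 0 < β) (hμ : 0 < μ) (hq : 0 < q)
    (R₀ : ℝ) (hR : R₀ = A * β / (μ * (q + μ))) (hR1 : 1 < R₀)
    (S I : ℝ → ℝ)
    (hS : ∀ t ≥ (0 : ℝ), HasDerivAt S (A - β * S t * I t - μ * S t) t)
    (hI : ∀ t ≥ (0 : ℝ), HasDerivAt I (β * S t * I t - (q + μ) * I t) t)
    (hS0 : 0 < S 0) (hI0 : 0 < I 0) :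
    Tendsto (fun t => (S t, I t)) atTop (nhds ((q + μ) / β, μ / β * (R₀ - 1))) := by
  have hqμ : 0 < q + μ := by linarith
  set Ss : ℝ := (q + μ) / β with hSsdef
  set Is : ℝ := μ / β * (R₀ - 1) with hIsdef
  have hSspos : 0 < Ss := by positivity
  have hIspos : 0 < Is := by
    have : 0 < R₀ - 1 := by linarith
    positivity
  have hβSs : β * Ss = q + μ := by rw [hSsdef]; field_simp
  have hAeq : A = β * Ss * Is + μ * Ss := by
    rw [hSsdef, hIsdef, hR]
    have h1 : μ * (q + μ) ≠ 0 := by positivity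
    field_simp
    ring
  -- continuity of S, I on [0,∞)
  have hScont : ∀ t ≥ (0:ℝ), ContinuousAt S t := fun t ht => (hS t ht).continuousAt
  have hIcont : ∀ t ≥ (0:ℝ), ContinuousAt I t := fun t ht => (hI t ht).continuousAt
  have hScontOn : ContinuousOn S (Ici 0) := fun x hx => (hScont x hx).continuousWithinAt
  have hIcontOn : ContinuousOn I (Ici 0) := fun x hx => (hIcont x hx).continuousWithinAt
  have hmaxcont : Continuous (fun t : ℝ => max t 0) := continuous_id.max continuous_const
  have hSmcont : Continuous (fun t => S (max t 0)) :=
    hScontOn.comp_continuous hmaxcont (fun x => mem_Ici.2 (le_max_right _ _))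
  have hImcont : Continuous (fun t => I (max t 0)) :=
    hIcontOn.comp_continuous hmaxcont (fun x => mem_Ici.2 (le_max_right _ _))
  -- positivity of I
  have hIpos : ∀ t ≥ (0:ℝ), 0 < I t := by
    apply sir_pos (g := fun t => β * S (max t 0) - (q + μ))
      ((continuous_const.mul hSmcont).sub continuous_const) hI _ hI0
    intro t ht
    show (β * S (max t 0) - (q + μ)) * I t ≤ _
    rw [max_eq_left ht]
    ring_nf
    exact le_refl _
  -- positivity of S
  have hSpos : ∀ t ≥ (0:ℝ), 0 < S t := by
    apply sir_pos (g := fun t => -(β * I (max t 0) + μ))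
      (((continuous_const.mul hImcont).add continuous_const).neg) hS _ hS0
    intro t ht
    show -(β * I (max t 0) + μ) * S t ≤ _
    rw [max_eq_left ht]
    nlinarith
  -- upper bound M₀ for S and I
  set M₀ : ℝ := max (S 0 + I 0) (A / μ) with hM₀def
  have hM₀pos : 0 < M₀ := lt_of_lt_of_le (by positivity : (0:ℝ) < A/μ) (le_max_right _ _)
  have hNle : ∀ t ≥ (0:ℝ), S t + I t ≤ M₀ := by
    have h := sir_ubound (k := μ) (c := A) hμ
      (f := fun t => S t + I t)
      (f' := fun t => (A - β * S t * I t - μ * S t) + (β * S t * I t - (q + μ) * I t))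
      (fun t ht => (hS t ht).add (hI t ht))
      (fun t ht => by
        show (A - β * S t * I t - μ * S t) + (β * S t * I t - (q + μ) * I t)
          ≤ A - μ * (S t + I t)
        have := hIpos t ht; nlinarith)
    exact h
  have hSle : ∀ t ≥ (0:ℝ), S t ≤ M₀ := fun t ht => by
    have h1 := hNle t ht; have h2 := hIpos t ht; linarith
  have hIle : ∀ t ≥ (0:ℝ), I t ≤ M₀ := fun t ht => by
    have h1 := hNle t ht; have h2 := hSpos t ht; linarith
  -- uniform lower bound for S
  set δS : ℝ := min (S 0) (A / (β * M₀ + μ)) with hδSdef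
  have hδSpos : 0 < δS := lt_min hS0 (by positivity)
  have hSge : ∀ t ≥ (0:ℝ), δS ≤ S t := by
    have h := sir_lbound (k := β * M₀ + μ) (c := A) (by positivity) hS
      (fun t ht => by
        have h1 := hIle t ht; have h2 := (hSpos t ht).le
        show A - (β * M₀ + μ) * S t ≤ A - β * S t * I t - μ * S t
        nlinarith [mul_nonneg (mul_nonneg hβ.le h2) (sub_nonneg.2 h1)])
    exact h
  -- Lyapunov function
  set k' : ℝ := μ + β * Is with hk'def
  have hk'pos : 0 < k' := by rw [hk'def]; positivity
  set V : ℝ → ℝ := fun t => (S t - Ss * Real.log (S t)) + (I t - Is * Real.log (I t)) with hVdef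
  set D : ℝ → ℝ := fun t => -(k' * (S t - Ss)^2 / S t) with hDdef
  have hVd : ∀ t ≥ (0:ℝ), HasDerivAt V (D t) t := by
    intro t ht
    have hSt := hSpos t ht; have hIt := hIpos t ht
    have h1 : HasDerivAt (fun u => S u - Ss * Real.log (S u))
        ((A - β * S t * I t - μ * S t) - Ss * ((A - β * S t * I t - μ * S t) / S t)) t :=
      (hS t ht).sub (((hS t ht).log hSt.ne').const_mul Ss)
    have h2 : HasDerivAt (fun u => I u - Is * Real.log (I u))
        ((β * S t * I t - (q + μ) * I t) - Is * ((β * S t * I t - (q + μ) * I t) / I t)) t :=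
      (hI t ht).sub (((hI t ht).log hIt.ne').const_mul Is)
    have h3 := h1.add h2
    refine h3.congr_deriv (Eq.symm ?_)
    rw [hDdef]
    have hq' : q + μ = β * Ss := hβSs.symm
    rw [hk'def, hAeq, hq']
    field_simp
    ring
  have hDnonpos : ∀ t ≥ (0:ℝ), D t ≤ 0 := by
    intro t ht
    have h1 := hSpos t ht
    rw [hDdef]
    have h2 : 0 ≤ k' * (S t - Ss)^2 / S t := by positivity
    simp only
    linarith
  have hVanti : AntitoneOn V (Ici 0) := sir_antitoneOn hVd hDnonpos
  set Vmin : ℝ := (Ss - Ss * Real.log Ss) + (Is - Is * Real.log Is) with hVmindef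
  have hVlb : ∀ t ≥ (0:ℝ), Vmin ≤ V t := fun t ht =>
    add_le_add (lya_min hSspos (hSpos t ht)) (lya_min hIspos (hIpos t ht))
  set Vm : ℝ → ℝ := fun t => V (max t 0) with hVmdef
  have hVmanti : Antitone Vm := fun s t hst =>
    hVanti (le_max_right s 0) (le_max_right t 0) (max_le_max hst le_rfl)
  have hVmbdd : BddBelow (range Vm) := ⟨Vmin, by
    rintro x ⟨t, rfl⟩; exact hVlb _ (le_max_right _ _)⟩
  set c : ℝ := ⨅ t, Vm t with hcdef
  have hVmtend : Tendsto Vm atTop (𝓝 c) := tendsto_atTop_ciInf hVmanti hVmbdd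
  have hcleV : ∀ t ≥ (0:ℝ), c ≤ V t := by
    intro t ht
    have h := ciInf_le hVmbdd t
    have h2 : Vm t = V t := by
      show V (max t 0) = V t
      rw [max_eq_left ht]
    rw [hcdef]
    rw [h2] at h
    exact h
  -- Lipschitz bound on S
  set C : ℝ := A + β * M₀ * M₀ + μ * M₀ + 1 with hCdef
  have hCpos : 0 < C := by rw [hCdef]; positivity
  have hderivBound : ∀ t ≥ (0:ℝ), |A - β * S t * I t - μ * S t| ≤ C := by
    intro t ht
    have h1 := hSpos t ht; have h2 := hIpos t ht
    have h3 := hSle t ht; have h4 := hIle t ht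
    have hassoc : β * S t * I t = β * (S t * I t) := mul_assoc _ _ _
    have hm1 : β * (S t * I t) ≤ β * (M₀ * M₀) :=
      mul_le_mul_of_nonneg_left (mul_le_mul h3 h4 h2.le hM₀pos.le) hβ.le
    have hm2 : μ * S t ≤ μ * M₀ := mul_le_mul_of_nonneg_left h3 hμ.le
    have hm3 : 0 < β * (S t * I t) := by positivity
    have hm4 : 0 < μ * S t := by positivity
    have hm5 : 0 < β * (M₀ * M₀) := by positivity
    rw [abs_le, hCdef, hassoc]
    constructor
    · linarith
    · linarith
  have hLip : ∀ t ≥ (0:ℝ), ∀ s, t ≤ s → |S s - S t| ≤ C * (s - t) := by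
    intro t ht s hts
    have hmono1 : MonotoneOn (fun u => C * u - S u) (Ici 0) := by
      apply sir_monotoneOn (f' := fun u => C - (A - β * S u * I u - μ * S u))
      · intro u hu
        have hCd : HasDerivAt (fun v => C * v) C u := by
          simpa using (hasDerivAt_id u).const_mul C
        exact hCd.sub (hS u hu)
      · intro u hu
        have := (abs_le.1 (hderivBound u hu)).2
        linarith
    have hmono2 : MonotoneOn (fun u => C * u + S u) (Ici 0) := by
      apply sir_monotoneOn (f' := fun u => C + (A - β * S u * I u - μ * S u))
      · intro u hu
        have hCd : HasDerivAt (fun v => C * v) C u := by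
          simpa using (hasDerivAt_id u).const_mul C
        exact hCd.add (hS u hu)
      · intro u hu
        have := (abs_le.1 (hderivBound u hu)).1
        linarith
    have e1 := hmono1 (mem_Ici.2 ht) (mem_Ici.2 (ht.trans hts)) hts
    have e2 := hmono2 (mem_Ici.2 ht) (mem_Ici.2 (ht.trans hts)) hts
    simp only at e1 e2
    rw [abs_le]
    constructor <;> linarith
  -- convergence of S to Ss
  have hStend : Tendsto S atTop (𝓝 Ss) := by
    rw [Metric.tendsto_atTop]
    intro ε hε
    set ρ : ℝ := k' * (ε/2)^2 / M₀ with hρdef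
    have hρpos : 0 < ρ := by rw [hρdef]; positivity
    set η : ℝ := min (ε / (2 * C)) 1 with hηdef
    have hηpos : 0 < η := lt_min (by positivity) one_pos
    obtain ⟨T₀, hT₀lt, hT₀0⟩ : ∃ T₀, Vm T₀ < c + ρ * η ∧ (0:ℝ) ≤ T₀ := by
      have h1 : ∀ᶠ t in atTop, Vm t < c + ρ * η :=
        hVmtend.eventually (gt_mem_nhds (by nlinarith))
      obtain ⟨T, hT⟩ := (h1.and (eventually_ge_atTop (0:ℝ))).exists
      exact ⟨T, hT.1, hT.2⟩
    refine ⟨T₀, fun t ht => ?_⟩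
    rw [Real.dist_eq]
    by_contra hcon
    push_neg at hcon
    have ht0 : (0:ℝ) ≤ t := le_trans hT₀0 ht
    -- on [t, t+η], |S s - Ss| ≥ ε/2
    have hmid : ∀ s ∈ Icc t (t + η), ε/2 ≤ |S s - Ss| := by
      intro s hs
      have h1 : |S s - S t| ≤ C * (s - t) := hLip t ht0 s hs.1
      have h2 : C * (s - t) ≤ C * η := by nlinarith [hs.2, hs.1]
      have h3 : C * η ≤ ε/2 := by
        rw [hηdef]
        calc C * min (ε/(2*C)) 1 ≤ C * (ε/(2*C)) :=
              mul_le_mul_of_nonneg_left (min_le_left _ _) hCpos.le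
          _ = ε/2 := by field_simp
      have h4 : |S t - Ss| ≤ |S t - S s| + |S s - Ss| := abs_sub_le _ _ _
      rw [abs_sub_comm (S t) (S s)] at h4
      nlinarith [hcon, h4, h1, h2, h3]
    -- D ≤ -ρ on [t, t+η]
    have hDle : ∀ s ∈ Icc t (t + η), D s ≤ -ρ := by
      intro s hs
      have hs0 : (0:ℝ) ≤ s := ht0.trans hs.1
      have h1 := hSpos s hs0
      have h2 := hSle s hs0
      have h3 := hmid s hs
      have h4 : (ε/2)^2 ≤ (S s - Ss)^2 := by
        have := sq_abs (S s - Ss)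
        nlinarith [abs_nonneg (S s - Ss)]
      rw [hDdef, hρdef]
      simp only
      rw [neg_le_neg_iff]
      rw [div_le_div_iff₀ hM₀pos h1]
      have e1 : k' * (ε/2)^2 * S s ≤ k' * (S s - Ss)^2 * S s :=
        mul_le_mul_of_nonneg_right (mul_le_mul_of_nonneg_left h4 hk'pos.le) h1.le
      have e2 : k' * (S s - Ss)^2 * S s ≤ k' * (S s - Ss)^2 * M₀ :=
        mul_le_mul_of_nonneg_left h2 (by positivity)
      exact le_trans e1 e2
    -- FTC and contradiction
    have huIcc : uIcc t (t + η) = Icc t (t + η) := uIcc_of_le (by linarith)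
    have hVdOn : ∀ s ∈ uIcc t (t + η), HasDerivAt V (D s) s := by
      intro s hs
      rw [huIcc] at hs
      exact hVd s (ht0.trans hs.1)
    have hDcont : ContinuousOn D (uIcc t (t + η)) := by
      rw [huIcc]
      have hsub : Icc t (t + η) ⊆ Ici 0 := fun x hx => ht0.trans hx.1
      apply ContinuousOn.neg
      apply ContinuousOn.div
      · exact (continuousOn_const.mul (((hScontOn.mono hsub).sub continuousOn_const).pow 2))
      · exact hScontOn.mono hsub
      · intro x hx
        exact (hSpos x (hsub hx)).ne'
    have hint : IntervalIntegrable D MeasureTheory.volume t (t + η) :=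
      hDcont.intervalIntegrable
    have hFTC : ∫ s in t..(t + η), D s = V (t + η) - V t :=
      intervalIntegral.integral_eq_sub_of_hasDerivAt hVdOn hint
    have hbound : ∫ s in t..(t + η), D s ≤ ∫ s in t..(t + η), (-ρ : ℝ) := by
      apply intervalIntegral.integral_mono_on (by linarith) hint
        intervalIntegrable_const
      intro s hs
      exact hDle s hs
    rw [intervalIntegral.integral_const, smul_eq_mul] at hbound
    have h5 : V t ≤ V T₀ := hVanti (mem_Ici.2 hT₀0) (mem_Ici.2 ht0) ht
    have h6 : c ≤ V (t + η) := hcleV _ (by linarith)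
    have hVmT₀ : Vm T₀ = V T₀ := by
      show V (max T₀ 0) = V T₀
      rw [max_eq_left hT₀0]
    rw [hVmT₀] at hT₀lt
    have h7 : (t + η - t) * (-ρ) = -(ρ * η) := by ring
    rw [h7] at hbound
    linarith
  -- limit of the I-part of V
  have hVtend : Tendsto V atTop (𝓝 c) := by
    apply hVmtend.congr'
    filter_upwards [eventually_ge_atTop (0:ℝ)] with t ht
    show V (max t 0) = V t
    rw [max_eq_left ht]
  have hVscont : ContinuousAt (fun x => x - Ss * Real.log x) Ss :=
    continuousAt_id.sub ((Real.continuousAt_log hSspos.ne').const_mul Ss)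
  have hVsStend : Tendsto (fun t => S t - Ss * Real.log (S t)) atTop
      (𝓝 (Ss - Ss * Real.log Ss)) := hVscont.tendsto.comp hStend
  set Li : ℝ := c - (Ss - Ss * Real.log Ss) with hLidef
  have hVitend : Tendsto (fun t => I t - Is * Real.log (I t)) atTop (𝓝 Li) := by
    have h1 := hVtend.sub hVsStend
    apply h1.congr
    intro t
    show V t - (S t - Ss * Real.log (S t)) = _
    have h2 : V t = (S t - Ss * Real.log (S t)) + (I t - Is * Real.log (I t)) := rfl
    rw [h2]; ring
  set W : ℝ := Is - Is * Real.log Is with hWdef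
  have hLige : W ≤ Li := by
    apply ge_of_tendsto hVitend
    filter_upwards [eventually_ge_atTop (0:ℝ)] with t ht
    exact lya_min hIspos (hIpos t ht)
  have hItend : Tendsto I atTop (𝓝 Is) := by
    rcases eq_or_lt_of_le hLige with heq | hlt
    · -- minimal level : convergence
      rw [Metric.tendsto_atTop]
      intro ε hε
      set ε' : ℝ := min ε (Is/2) with hε'def
      have hε'pos : 0 < ε' := lt_min hε (by positivity)
      have hε'le : ε' ≤ ε := min_le_left _ _
      have hε'Is : ε' ≤ Is/2 := min_le_right _ _
      have hml : W < (Is - ε') - Is * Real.log (Is - ε') :=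
        lya_strict hIspos (by linarith) (by linarith)
      have hmr : W < (Is + ε') - Is * Real.log (Is + ε') :=
        lya_strict hIspos (by linarith) (by linarith)
      set θ : ℝ := min ((Is - ε') - Is * Real.log (Is - ε') - W)
        ((Is + ε') - Is * Real.log (Is + ε') - W) with hθdef
      have hθpos : 0 < θ := lt_min (by linarith) (by linarith)
      have hev : ∀ᶠ t in atTop, I t - Is * Real.log (I t) < W + θ := by
        apply hVitend.eventually (gt_mem_nhds ?_)
        rw [← heq]; linarith
      obtain ⟨T, hT⟩ := (hev.and (eventually_ge_atTop (0:ℝ))).exists_forall_of_atTop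
      refine ⟨T, fun t ht => ?_⟩
      obtain ⟨hVt, hTt0⟩ := hT t ht
      rw [Real.dist_eq]
      by_contra hcon
      push_neg at hcon
      rcases le_abs.1 hcon with h | h
      · -- I t ≥ Is + ε
        have h1 : Is + ε' ≤ I t := by linarith
        have h2 := lya_mono hIspos (by linarith : Is ≤ Is + ε') h1
        have h3 : θ ≤ (Is + ε') - Is * Real.log (Is + ε') - W := min_le_right _ _
        linarith
      · -- I t ≤ Is - ε
        rw [neg_sub] at h
        have h1 : I t ≤ Is - ε' := by linarith
        have h2 := lya_anti hIspos (hIpos t hTt0) h1 (by linarith : Is - ε' ≤ Is)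
        have h3 : θ ≤ (Is - ε') - Is * Real.log (Is - ε') - W := min_le_left _ _
        linarith
    · -- non-minimal level : contradiction
      exfalso
      set θ : ℝ := (Li - W)/2 with hθdef
      have hθpos : 0 < θ := by rw [hθdef]; linarith
      have hVicont : ContinuousAt (fun y => y - Is * Real.log y) Is :=
        continuousAt_id.sub ((Real.continuousAt_log hIspos.ne').const_mul Is)
      obtain ⟨d₀, hd₀pos, hd₀⟩ := Metric.continuousAt_iff.1 hVicont θ hθpos
      set r : ℝ := d₀/2 with hrdef
      have hrpos : 0 < r := by rw [hrdef]; linarith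
      have hrprop : ∀ y : ℝ, |y - Is| ≤ r → y - Is * Real.log y < W + θ := by
        intro y hy
        have h1 : dist y Is < d₀ := by
          rw [Real.dist_eq]; rw [hrdef] at hy; linarith
        have h2 := hd₀ h1
        rw [Real.dist_eq] at h2
        have h3 := (abs_lt.1 h2).2
        have h4 : Is - Is * Real.log Is = W := rfl
        simp only [h4] at h3
        linarith
      have hev : ∀ᶠ t in atTop, W + θ < I t - Is * Real.log (I t) := by
        have h1 : Li - θ < Li := by linarith
        have h2 := hVitend.eventually (lt_mem_nhds h1)
        apply h2.mono
        intro t ht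
        have : Li - θ = W + θ := by rw [hθdef]; ring
        linarith
      obtain ⟨T₁, hT₁⟩ := (hev.and (eventually_ge_atTop (0:ℝ))).exists_forall_of_atTop
      have hT₁0 : (0:ℝ) ≤ T₁ := (hT₁ T₁ le_rfl).2
      have hfar : ∀ t ≥ T₁, r < |I t - Is| := by
        intro t ht
        by_contra hcl
        push_neg at hcl
        have := hrprop (I t) hcl
        have := (hT₁ t ht).1
        linarith
      have hne : ∀ t ≥ T₁, I t ≠ Is := by
        intro t ht h
        have := hfar t ht
        rw [h] at this
        simp at this
        linarith
      -- σ and the time after which S is σ-close to Ss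
      set σ : ℝ := β * Ss * r / (2 * (μ + β * Is + β * r)) with hσdef
      have hσpos : 0 < σ := by rw [hσdef]; positivity
      have hσkey : σ * (μ + β * Is + β * r) ≤ β * Ss * r / 2 := by
        rw [hσdef]
        rw [div_mul_eq_mul_div, div_le_div_iff₀ (by positivity) (by norm_num)]
        ring_nf
        nlinarith [mul_pos (mul_pos hβ hSspos) hrpos, mul_pos hμ (mul_pos (mul_pos hβ hSspos) hrpos)]
      obtain ⟨T₂', hT₂'⟩ := Metric.tendsto_atTop.1 hStend σ hσpos
      set T₃ : ℝ := max T₁ (max T₂' 0) with hT₃def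
      have hT₃1 : T₁ ≤ T₃ := le_max_left _ _
      have hT₃2 : T₂' ≤ T₃ := le_trans (le_max_left _ _) (le_max_right _ _)
      have hT₃0 : (0:ℝ) ≤ T₃ := le_trans (le_max_right _ _) (le_max_right _ _)
      have hSclose : ∀ t ≥ T₃, |S t - Ss| < σ := by
        intro t ht
        have h1 := hT₂' t (le_trans hT₃2 ht)
        rwa [Real.dist_eq] at h1
      rcases lt_or_gt_of_ne (hne T₁ le_rfl) with hlow | hhigh
      · -- I stays below Is : S grows without bound, contradiction
        have hlow' : ∀ t ≥ T₁, I t < Is := by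
          intro t ht
          have h1 := sir_no_cross (f := fun u => -I u) (T := T₁) (v := -Is)
            (fun u hu => (hIcont u (le_trans hT₁0 hu)).neg)
            (fun u hu h => hne u hu (neg_injective h)) (show -Is < -I T₁ by linarith) t ht
          simp only [neg_lt_neg_iff] at h1
          exact h1
        have hIub : ∀ t ≥ T₁, I t ≤ Is - r := by
          intro t ht
          have h1 := hfar t ht
          have h2 := hlow' t ht
          have h3 : |I t - Is| = Is - I t := by
            rw [abs_of_nonpos (by linarith)]; ring
          linarith
        set d : ℝ := β * Ss * r / 2 with hddef
        have hdpos : 0 < d := by rw [hddef]; positivity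
        have hS'ge : ∀ t ≥ T₃, d ≤ A - β * S t * I t - μ * S t := by
          intro t ht
          have ht0' : (0:ℝ) ≤ t := le_trans hT₃0 ht
          have h1 := hSclose t ht
          obtain ⟨h2a, h2b⟩ := abs_lt.1 h1
          have h3 := hIub t (le_trans hT₃1 ht)
          have h5 := hSpos t ht0'
          rw [hddef]
          exact sir_dlow A β μ Ss Is r σ (S t) (I t) hβ hμ hIspos hrpos hσpos
            hAeq hσkey h5 (by linarith) (by linarith) h3
        have hgrow := sir_growth (f := S)
          (f' := fun u => A - β * S u * I u - μ * S u) (T := T₃) (d := d)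
          (fun u hu => hS u (le_trans hT₃0 hu)) hS'ge
        set tb : ℝ := T₃ + (M₀ - S T₃) / d + 1 with htbdef
        have hST₃ : S T₃ ≤ M₀ := hSle T₃ hT₃0
        have htb : T₃ ≤ tb := by
          rw [htbdef]
          have : 0 ≤ (M₀ - S T₃) / d := div_nonneg (by linarith) hdpos.le
          linarith
        have h6 := hgrow tb htb
        have h7 := hSle tb (le_trans hT₃0 htb)
        have h8 : d * (tb - T₃) = (M₀ - S T₃) + d := by
          rw [htbdef]
          field_simp
          ring
        linarith
      · -- I stays above Is : S decays without bound, contradiction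
        have hup : ∀ t ≥ T₁, Is < I t :=
          sir_no_cross (fun u hu => hIcont u (le_trans hT₁0 hu))
            (fun u hu h => hne u hu h) hhigh
        have hIlb2 : ∀ t ≥ T₁, Is + r ≤ I t := by
          intro t ht
          have h1 := hfar t ht
          have h2 := hup t ht
          have h3 : |I t - Is| = I t - Is := abs_of_pos (by linarith)
          linarith
        set d : ℝ := β * Ss * r / 2 with hddef
        have hdpos : 0 < d := by rw [hddef]; positivity
        have hS'le : ∀ t ≥ T₃, A - β * S t * I t - μ * S t ≤ -d := by
          intro t ht
          have ht0' : (0:ℝ) ≤ t := le_trans hT₃0 ht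
          have h1 := hSclose t ht
          obtain ⟨h2a, h2b⟩ := abs_lt.1 h1
          have h3 := hIlb2 t (le_trans hT₃1 ht)
          have h5 := hSpos t ht0'
          rw [hddef]
          exact sir_dhigh A β μ Ss Is r σ (S t) (I t) hβ hμ hIspos hrpos hσpos
            hAeq hσkey h5 (by linarith) (by linarith) h3
        have hgrow := sir_growth (f := fun u => -S u)
          (f' := fun u => -(A - β * S u * I u - μ * S u)) (T := T₃) (d := d)
          (fun u hu => (hS u (le_trans hT₃0 hu)).neg)
          (fun u hu => by
            have h9 := hS'le u hu
            show d ≤ -(A - β * S u * I u - μ * S u)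
            linarith)
        set tb : ℝ := T₃ + S T₃ / d + 1 with htbdef
        have hST₃ : 0 < S T₃ := hSpos T₃ hT₃0
        have htb : T₃ ≤ tb := by
          rw [htbdef]
          have : 0 ≤ S T₃ / d := by positivity
          linarith
        have h6 := hgrow tb htb
        have h7 := hSpos tb (le_trans hT₃0 htb)
        have h8 : d * (tb - T₃) = S T₃ + d := by
          rw [htbdef]
          field_simp
          ring
        linarith
  exact hStend.prodMk_nhds hItend
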